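/- Let L be a finite geometric lattice and p ∈ L with p ≠ 0. Then the chain complex (A*([0,p]), ∂) obtained by restricting the Orlik–Solomon differential ∂ to the OS-algebra of the interval [0,p], graded so that the degree −i part is ⊕_{q ≤ p, r(q)=i} A*([0,p])_q, is exact. -/

import Mathlib

open scoped Classical

structure GeometricLattice (L : Type*) [Lattice L] [OrderBot L] [Fintype L] where
  rk : L → ℕ
  rk_bot : rk ⊥ = 0
  rk_strictMono : StrictMono rk
  rk_covby : ∀ {p q : L}, p ⋖ q → rk q = rk p + 1
  submodular : ∀ p q : L, rk (p ⊓ q) + rk (p ⊔ q) ≤ rk p + rk q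
  atomistic : ∀ p : L, p ≠ ⊥ → ∃ S : Finset L, (∀ a ∈ S, IsAtom a) ∧ p = S.sup id

variable (R : Type*) [CommRing R] (L : Type*) [Lattice L] [OrderBot L] [Fintype L]

/-- The type of atoms of `L`. -/
def Atoms : Type _ := {a : L // IsAtom a}

noncomputable instance : Fintype (Atoms L) := Subtype.fintype _

/-- A fixed enumeration of the elements of `L`, used only to order the atoms in
exterior-algebra sign computations. -/
noncomputable def elemIdx : L → ℕ := fun x => ((Fintype.equivFin L) x : ℕ)

/-- The underlying module of the exterior algebra `E^*(L)` on the atoms of `L`: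
the free `R`-module with basis `e_S` for `S` a finite set of atoms. -/
def OSModule : Type _ := Finset (Atoms L) →₀ R

noncomputable instance : AddCommGroup (OSModule R L) := Finsupp.instAddCommGroup
noncomputable instance : Module R (OSModule R L) := Finsupp.module _ _

/-- basis vector `e_S` -/
noncomputable def osE (S : Finset (Atoms L)) : OSModule R L := Finsupp.single S 1

/-- the sign exponent of `a` inside `S`. -/
noncomputable def delSign (S : Finset (Atoms L)) (a : Atoms L) : ℕ :=
  (S.filter (fun b => elemIdx L b.val < elemIdx L a.val)).card

/-- the Orlik–Solomon derivation `∂ e_S = ∑_j (-1)^{j-1} e_{S \ a_j}`. -/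
noncomputable def osDel : OSModule R L →ₗ[R] OSModule R L :=
  Finsupp.lift (OSModule R L) R (Finset (Atoms L)) fun S =>
    ∑ a ∈ S, ((-1 : R) ^ delSign L S a) • osE R L (S.erase a)

/-- number of inversions between `S` and `T` in the chosen ordering. -/
noncomputable def mulSign (S T : Finset (Atoms L)) : ℕ :=
  ((S ×ˢ T).filter (fun x => elemIdx L x.2.val < elemIdx L x.1.val)).card

/-- the exterior product on `E^*(L)`: `e_S ⋅ e_T = ± e_{S ∪ T}` if `S, T` are
disjoint, and `0` otherwise. -/
noncomputable def osMul : OSModule R L →ₗ[R] OSModule R L →ₗ[R] OSModule R L :=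
  Finsupp.lift (OSModule R L →ₗ[R] OSModule R L) R (Finset (Atoms L)) fun S =>
    Finsupp.lift (OSModule R L) R (Finset (Atoms L)) fun T =>
      if Disjoint S T then ((-1 : R) ^ mulSign L S T) • osE R L (S ∪ T) else 0

/-- a set of atoms is dependent if the rank of its join is less than its size. -/
def IsDepSet (gl : GeometricLattice L) (S : Finset (Atoms L)) : Prop :=
  gl.rk (S.sup fun a => a.val) < S.card

/-- The Orlik–Solomon ideal: the span of all products `e_T ⋅ ∂ e_S` for `S` a
dependent set of atoms (this spans the two-sided ideal generated by the `∂ e_S`). -/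
noncomputable def osIdeal (gl : GeometricLattice L) : Submodule R (OSModule R L) :=
  Submodule.span R {x | ∃ (T S : Finset (Atoms L)), IsDepSet L gl S ∧
    x = osMul R L (osE R L T) (osDel R L (osE R L S))}

/-- the `L`-homogeneous part of `E^*(L)` of order `p`: the span of the `e_S` with
`⋁ S = p`. -/
noncomputable def osPiece (p : L) : Submodule R (OSModule R L) :=
  Submodule.span R {x | ∃ S : Finset (Atoms L), (S.sup fun a => a.val) = p ∧ x = osE R L S}

/-- The degree-`i` part (with respect to the negative grading by rank) of the
exterior algebra of the interval `[⊥, p]`: the span of the monomials `e_S` with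
all atoms of `S` below `p` and `rk (⋁ S) = i`. -/
noncomputable def osIntervalPiece (gl : GeometricLattice L) (p : L) (i : ℕ) :
    Submodule R (OSModule R L) :=
  Submodule.span R {x | ∃ S : Finset (Atoms L), (∀ a ∈ S, a.val ≤ p) ∧
    gl.rk (S.sup fun a => a.val) = i ∧ x = osE R L S}

/-- The Orlik–Solomon ideal of the interval `[⊥, p]` inside `E^*([⊥, p])`. -/
noncomputable def osIntervalIdeal (gl : GeometricLattice L) (p : L) :
    Submodule R (OSModule R L) :=
  Submodule.span R {x | ∃ (T S : Finset (Atoms L)), (∀ a ∈ T, a.val ≤ p) ∧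
    (∀ a ∈ S, a.val ≤ p) ∧ IsDepSet L gl S ∧
    x = osMul R L (osE R L T) (osDel R L (osE R L S))}

set_option linter.unusedSectionVars false

lemma osDel_osE (S : Finset (Atoms L)) :
    osDel R L (osE R L S) = ∑ a ∈ S, ((-1 : R) ^ delSign L S a) • osE R L (S.erase a) := by
  show Finsupp.lift _ _ _ _ (Finsupp.single S 1) = _
  rw [Finsupp.lift_apply, Finsupp.sum_single_index] <;> simp
lemma osMul_osE (S T : Finset (Atoms L)) :
    osMul R L (osE R L S) (osE R L T) =
      if Disjoint S T then ((-1 : R) ^ mulSign L S T) • osE R L (S ∪ T) else 0 := by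
  unfold osMul osE
  erw [Finsupp.lift_apply, Finsupp.sum_single_index (by exact zero_smul _ _), one_smul,
    Finsupp.lift_apply, Finsupp.sum_single_index (by exact zero_smul _ _), one_smul]
lemma elemIdx_inj : Function.Injective (elemIdx L) := fun x y h => by
  have := (Fintype.equivFin L).injective (Fin.val_injective h)
  exact this

lemma filter_card_split {α : Type*} [DecidableEq α] (P : α → Prop) [DecidablePred P]
    {a : α} {T : Finset α} (ha : a ∈ T) :
    (T.filter P).card = ((T.erase a).filter P).card + (if P a then 1 else 0) := by
  rw [Finset.filter_erase]
  by_cases h : P a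
  · rw [if_pos h, Finset.card_erase_of_mem (Finset.mem_filter.2 ⟨ha, h⟩)]
    have : 0 < (T.filter P).card := Finset.card_pos.2 ⟨a, Finset.mem_filter.2 ⟨ha, h⟩⟩
    omega
  · rw [if_neg h, Finset.erase_eq_of_notMem (fun hc => h (Finset.mem_filter.1 hc).2), add_zero]

lemma mulSign_singleton (b : Atoms L) (T : Finset (Atoms L)) :
    mulSign L {b} T = delSign L T b := by
  unfold mulSign delSign
  rw [Finset.singleton_product, Finset.filter_map, Finset.card_map]
  rfl

lemma delSign_self_erase (b : Atoms L) (T : Finset (Atoms L)) :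
    delSign L (T.erase b) b = delSign L T b := by
  unfold delSign
  rw [Finset.filter_erase, Finset.erase_eq_of_notMem]
  intro hc
  exact absurd (Finset.mem_filter.1 hc).2 (lt_irrefl _)

lemma delSign_insert_self (b : Atoms L) (T : Finset (Atoms L)) :
    delSign L (insert b T) b = delSign L T b := by
  unfold delSign
  rw [Finset.filter_insert, if_neg (lt_irrefl _)]

lemma delSign_insert_of_ne (b a : Atoms L) (T : Finset (Atoms L)) (hb : b ∉ T) :
    delSign L (insert b T) a
      = delSign L T a + (if elemIdx L b.val < elemIdx L a.val then 1 else 0) := by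
  unfold delSign
  rw [Finset.filter_insert]
  by_cases h : elemIdx L b.val < elemIdx L a.val
  · rw [if_pos h, if_pos h, Finset.card_insert_of_notMem (fun hc => hb (Finset.mem_filter.1 hc).1)]
  · rw [if_neg h, if_neg h, add_zero]

lemma delSign_erase_of_mem (b a : Atoms L) (T : Finset (Atoms L)) (ha : a ∈ T) :
    delSign L T b
      = delSign L (T.erase a) b + (if elemIdx L a.val < elemIdx L b.val then 1 else 0) := by
  unfold delSign
  exact filter_card_split _ ha

lemma finset_singleton_union {α : Type*} [DecidableEq α] (a : α) (s : Finset α) :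
    ({a} : Finset α) ∪ s = insert a s := by
  ext x; simp
lemma mulSign_union_right (A B C : Finset (Atoms L)) (h : Disjoint B C) :
    mulSign L A (B ∪ C) = mulSign L A B + mulSign L A C := by
  unfold mulSign
  rw [Finset.product_union, Finset.filter_union, Finset.card_union_of_disjoint]
  exact Finset.disjoint_filter_filter (Finset.disjoint_left.2 fun x hx hx' => by
    exact (Finset.disjoint_left.1 h (Finset.mem_product.1 hx).2 (Finset.mem_product.1 hx').2))

lemma mulSign_union_left (A B C : Finset (Atoms L)) (h : Disjoint A B) :
    mulSign L (A ∪ B) C = mulSign L A C + mulSign L B C := by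
  unfold mulSign
  rw [Finset.union_product, Finset.filter_union, Finset.card_union_of_disjoint]
  exact Finset.disjoint_filter_filter (Finset.disjoint_left.2 fun x hx hx' => by
    exact (Finset.disjoint_left.1 h (Finset.mem_product.1 hx).1 (Finset.mem_product.1 hx').1))

lemma osMul_empty (z : OSModule R L) : osMul R L (osE R L ∅) z = z := by
  have h : osMul R L (osE R L ∅) = LinearMap.id (R := R) (M := OSModule R L) := by
    apply Finsupp.lhom_ext
    intro a b
    have hb : (Finsupp.single a b : OSModule R L) = b • osE R L a := by
      rw [osE]; exact (Finsupp.smul_single_one a b).symm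
    have hm : mulSign L ∅ a = 0 := by unfold mulSign; simp
    show osMul R L (osE R L ∅) (Finsupp.single a b : OSModule R L) = (Finsupp.single a b : OSModule R L)
    rw [hb, map_smul]
    erw [osMul_osE]
    simp [hm]
  rw [h, LinearMap.id_apply]
lemma neg_one_pow_succ_add (k : ℕ) : (-1 : R) ^ (k + 1) + (-1 : R) ^ k = 0 := by
  rw [pow_succ]; ring

lemma os_contract (b : Atoms L) (T : Finset (Atoms L)) :
    osE R L T = osDel R L (osMul R L (osE R L {b}) (osE R L T))
      + osMul R L (osE R L {b}) (osDel R L (osE R L T)) := by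
  by_cases hb : b ∈ T
  · have hnd : ¬ Disjoint ({b} : Finset (Atoms L)) T := by
      rw [Finset.disjoint_singleton_left]; exact fun h => h hb
    erw [osMul_osE]
    rw [if_neg hnd, map_zero, zero_add, osDel_osE, map_sum]
    have hterm : ∀ a ∈ T, osMul R L (osE R L {b})
        (((-1 : R) ^ delSign L T a) • osE R L (T.erase a))
        = if a = b then osE R L T else 0 := by
      intro a ha
      rw [map_smul]
      erw [osMul_osE]
      by_cases hab : a = b
      · subst hab
        rw [if_pos (Finset.disjoint_singleton_left.2 (Finset.notMem_erase a T)),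
          if_pos rfl, mulSign_singleton, delSign_self_erase, smul_smul, ← pow_add,
          Even.neg_one_pow ⟨delSign L T a, rfl⟩, one_smul, finset_singleton_union _ _,
          Finset.insert_erase ha]
      · rw [if_neg (fun h : Disjoint _ _ => Finset.disjoint_singleton_left.1 h
          (Finset.mem_erase.2 ⟨fun hc => hab hc.symm, hb⟩)), smul_zero, if_neg hab]
    rw [Finset.sum_congr rfl hterm, Finset.sum_ite_eq' T b (fun _ => osE R L T), if_pos hb]
  · have hd : Disjoint ({b} : Finset (Atoms L)) T := Finset.disjoint_singleton_left.2 hb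
    have key : ((-1 : R) ^ delSign L T b) •
        (∑ a ∈ T, ((-1 : R) ^ delSign L (insert b T) a) • osE R L ((insert b T).erase a))
        + osMul R L (osE R L {b}) (osDel R L (osE R L T)) = 0 := by
      rw [osDel_osE, map_sum, Finset.smul_sum, ← Finset.sum_add_distrib]
      apply Finset.sum_eq_zero
      intro a ha
      have hab : a ≠ b := fun h => hb (h ▸ ha)
      have h1 : (insert b T).erase a = insert b (T.erase a) :=
        Finset.erase_insert_of_ne hab.symm
      have hdisj : Disjoint ({b} : Finset (Atoms L)) (T.erase a) :=
        Finset.disjoint_singleton_left.2 (fun hc => hb (Finset.mem_of_mem_erase hc))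
      rw [map_smul]
      erw [osMul_osE]
      rw [if_pos hdisj, finset_singleton_union _ _, h1, smul_smul, smul_smul, ← add_smul,
        ← pow_add, ← pow_add, mulSign_singleton, delSign_insert_of_ne L b a T hb,
        delSign_erase_of_mem L b a T ha]
      have hne : elemIdx L a.val ≠ elemIdx L b.val := fun h =>
        hab (Subtype.ext (elemIdx_inj L h))
      have hsum : (if elemIdx L a.val < elemIdx L b.val then 1 else 0)
          + (if elemIdx L b.val < elemIdx L a.val then 1 else 0) = 1 := by
        rcases lt_or_gt_of_ne hne with h | h
        · rw [if_pos h, if_neg (not_lt_of_gt h)]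
        · rw [if_neg (not_lt_of_gt h), if_pos h]
      generalize hia : (if elemIdx L a.val < elemIdx L b.val then 1 else 0) = ia at hsum ⊢
      generalize hib : (if elemIdx L b.val < elemIdx L a.val then 1 else 0) = ib at hsum ⊢
      have hexp : delSign L (T.erase a) b + ia + (delSign L T a + ib)
          = delSign L T a + delSign L (T.erase a) b + 1 := by omega
      rw [hexp, neg_one_pow_succ_add, zero_smul]
    erw [osMul_osE]
    rw [if_pos hd, finset_singleton_union _ _, map_smul, osDel_osE, Finset.sum_insert hb,
      Finset.erase_insert hb, delSign_insert_self, mulSign_singleton, smul_add, smul_smul,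
      ← pow_add, Even.neg_one_pow ⟨delSign L T b, rfl⟩, one_smul, add_assoc, key, add_zero]
lemma osMul_osE_assoc (b : Atoms L) (T C : Finset (Atoms L)) :
    osMul R L (osE R L {b}) (osMul R L (osE R L T) (osE R L C))
      = osMul R L (osMul R L (osE R L {b}) (osE R L T)) (osE R L C) := by
  have hbE : osMul R L (osE R L {b}) (osE R L T) =
      if Disjoint ({b} : Finset (Atoms L)) T
        then ((-1 : R) ^ mulSign L {b} T) • osE R L ({b} ∪ T) else 0 := osMul_osE R L _ _
  have e1 : osMul R L (osE R L T) (osE R L C) =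
      if Disjoint T C then ((-1 : R) ^ mulSign L T C) • osE R L (T ∪ C) else 0 :=
    osMul_osE R L _ _
  by_cases hbT : b ∈ T
  · have hnd : ¬ Disjoint ({b} : Finset (Atoms L)) T :=
      fun h => Finset.disjoint_singleton_left.1 h hbT
    rw [hbE, if_neg hnd, map_zero, LinearMap.zero_apply]
    by_cases hTC : Disjoint T C
    · rw [e1, if_pos hTC, map_smul]
      erw [osMul_osE]
      rw [if_neg (fun h => Finset.disjoint_singleton_left.1 h (Finset.mem_union_left C hbT)),
        smul_zero]
    · rw [e1, if_neg hTC, map_zero]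
  · have hd : Disjoint ({b} : Finset (Atoms L)) T := Finset.disjoint_singleton_left.2 hbT
    rw [hbE, if_pos hd, finset_singleton_union b T, map_smul, LinearMap.smul_apply]
    by_cases hTC : Disjoint T C
    · rw [e1, if_pos hTC, map_smul]
      erw [osMul_osE, osMul_osE]
      by_cases hbC : b ∈ C
      · rw [if_neg (fun h => Finset.disjoint_singleton_left.1 h
            (Finset.mem_union_right T hbC)), smul_zero,
          if_neg (fun h => Finset.disjoint_left.1 h (Finset.mem_insert_self b T) hbC),
          smul_zero]
      · have hbTC : Disjoint ({b} : Finset (Atoms L)) (T ∪ C) :=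
          Finset.disjoint_singleton_left.2 (fun h => (Finset.mem_union.1 h).elim hbT hbC)
        have hiC : Disjoint (insert b T) C := by
          rw [Finset.disjoint_left]
          intro x hx hxC
          rcases Finset.mem_insert.1 hx with rfl | hxT
          · exact hbC hxC
          · exact Finset.disjoint_left.1 hTC hxT hxC
        rw [if_pos hbTC, if_pos hiC, finset_singleton_union b (T ∪ C), Finset.insert_union,
          smul_smul, smul_smul, ← pow_add, ← pow_add]
        congr 2
        rw [mulSign_union_right L {b} T C hTC, ← finset_singleton_union b T,
          mulSign_union_left L {b} T C hd]
        omega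
    · rw [e1, if_neg hTC, map_zero]
      erw [osMul_osE]
      rw [if_neg (fun h => hTC (h.mono_left (Finset.subset_insert b T))), smul_zero]
lemma osMul_single_mul (b : Atoms L) (T : Finset (Atoms L)) (z : OSModule R L) :
    osMul R L (osE R L {b}) (osMul R L (osE R L T) z)
      = osMul R L (osMul R L (osE R L {b}) (osE R L T)) z := by
  have h : (osMul R L (osE R L {b})).comp (osMul R L (osE R L T))
      = osMul R L (osMul R L (osE R L {b}) (osE R L T)) := by
    apply Finsupp.lhom_ext
    intro C r
    have hr : (Finsupp.single C r : OSModule R L) = r • osE R L C := by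
      rw [osE]; exact (Finsupp.smul_single_one C r).symm
    show osMul R L (osE R L {b}) (osMul R L (osE R L T) (Finsupp.single C r : OSModule R L)) = osMul R L (osMul R L (osE R L {b}) (osE R L T)) (Finsupp.single C r : OSModule R L)
    rw [hr, map_smul, map_smul, map_smul]
    exact congrArg (fun t => r • t) (osMul_osE_assoc R L b T C)
  exact DFunLike.congr_fun h z

lemma ideal_mul_closed (gl : GeometricLattice L) (p : L) (b : Atoms L) (hbp : b.val ≤ p)
    {z : OSModule R L} (hz : z ∈ osIntervalIdeal R L gl p) :
    osMul R L (osE R L {b}) z ∈ osIntervalIdeal R L gl p := by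
  induction hz using Submodule.span_induction with
  | mem x hx =>
    obtain ⟨T, S, hT, hS, hdep, rfl⟩ := hx
    rw [osMul_single_mul, osMul_osE]
    by_cases hbT : b ∈ T
    · rw [if_neg (fun h => Finset.disjoint_singleton_left.1 h hbT), map_zero,
        LinearMap.zero_apply]
      exact Submodule.zero_mem _
    · rw [if_pos (Finset.disjoint_singleton_left.2 hbT), finset_singleton_union b T,
        map_smul, LinearMap.smul_apply]
      exact Submodule.smul_mem _ _ (Submodule.subset_span
        ⟨insert b T, S, fun a ha => (Finset.mem_insert.1 ha).elim (fun h => h ▸ hbp) (hT a),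
          hS, hdep, rfl⟩)
  | zero => rw [map_zero]; exact Submodule.zero_mem _
  | add x y _ _ hx hy => rw [map_add]; exact Submodule.add_mem _ hx hy
  | smul r x _ hx => rw [map_smul]; exact Submodule.smul_mem _ _ hx

lemma del_dep_mem_ideal (gl : GeometricLattice L) (p : L) {S : Finset (Atoms L)}
    (hS : ∀ a ∈ S, a.val ≤ p) (hdep : IsDepSet L gl S) :
    osDel R L (osE R L S) ∈ osIntervalIdeal R L gl p :=
  Submodule.subset_span ⟨∅, S, fun a ha => absurd ha (Finset.notMem_empty a), hS, hdep,
    (osMul_empty R L _).symm⟩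

lemma rk_atom (gl : GeometricLattice L) (a : Atoms L) : gl.rk a.val = 1 := by
  rw [gl.rk_covby a.2.bot_covBy, gl.rk_bot]

lemma rk_sup_atom_le (gl : GeometricLattice L) (x : L) (a : Atoms L) :
    gl.rk (a.val ⊔ x) ≤ gl.rk x + 1 := by
  have := gl.submodular a.val x
  rw [rk_atom L gl a] at this
  omega

lemma rk_sup_le_card (gl : GeometricLattice L) (S : Finset (Atoms L)) :
    gl.rk (S.sup fun a => a.val) ≤ S.card := by
  induction S using Finset.induction_on with
  | empty => simp [gl.rk_bot]
  | @insert a S ha ih =>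
    rw [Finset.sup_insert, Finset.card_insert_of_notMem ha]
    exact le_trans (rk_sup_atom_le L gl _ a) (by omega)
lemma os_main_claim (gl : GeometricLattice L) (p : L) (b : Atoms L) (hbp : b.val ≤ p)
    (i : ℕ) {x : OSModule R L} (hx : x ∈ osIntervalPiece R L gl p i) :
    ∃ y ∈ osIntervalPiece R L gl p (i + 1),
      x - osDel R L y - osMul R L (osE R L {b}) (osDel R L x)
        ∈ osIntervalIdeal R L gl p := by
  induction hx using Submodule.span_induction with
  | mem x hx =>
    obtain ⟨S, hSp, hrk, rfl⟩ := hx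
    have hK := os_contract R L b S
    by_cases hbS : b ∈ S
    · refine ⟨0, Submodule.zero_mem _, ?_⟩
      have h0 : osMul R L (osE R L {b}) (osE R L S) = 0 := by
        erw [osMul_osE]
        rw [if_neg (fun h => Finset.disjoint_singleton_left.1 h hbS)]
      rw [h0, map_zero, zero_add] at hK
      rw [map_zero, sub_zero, ← hK, sub_self]
      exact Submodule.zero_mem _
    · have hMb : osMul R L (osE R L {b}) (osE R L S)
          = ((-1 : R) ^ mulSign L {b} S) • osE R L (insert b S) := by
        erw [osMul_osE]
        rw [if_pos (Finset.disjoint_singleton_left.2 hbS), finset_singleton_union]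
      rw [hMb] at hK
      have hUp : ∀ a ∈ insert b S, a.val ≤ p := fun a ha =>
        (Finset.mem_insert.1 ha).elim (fun h => h ▸ hbp) (hSp a)
      have hub : gl.rk ((insert b S).sup fun a => a.val) ≤ i + 1 := by
        rw [Finset.sup_insert]
        have := rk_sup_atom_le L gl (S.sup fun a => a.val) b
        omega
      have hlb : i ≤ gl.rk ((insert b S).sup fun a => a.val) := by
        rw [← hrk]
        exact gl.rk_strictMono.monotone (Finset.sup_mono (Finset.subset_insert b S))
      by_cases hU : gl.rk ((insert b S).sup fun a => a.val) = i + 1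
      · refine ⟨((-1 : R) ^ mulSign L {b} S) • osE R L (insert b S),
          Submodule.smul_mem _ _ (Submodule.subset_span ⟨insert b S, hUp, hU, rfl⟩), ?_⟩
        have h0 : osE R L S - osDel R L (((-1 : R) ^ mulSign L {b} S) • osE R L (insert b S))
            - osMul R L (osE R L {b}) (osDel R L (osE R L S)) = 0 := by
          nth_rewrite 1 [hK]
          abel
        rw [h0]
        exact Submodule.zero_mem _
      · have hUi : gl.rk ((insert b S).sup fun a => a.val) = i := by omega
        have hcard : i ≤ S.card := hrk ▸ rk_sup_le_card L gl S
        have hdep : IsDepSet L gl (insert b S) := by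
          rw [IsDepSet, hUi, Finset.card_insert_of_notMem hbS]
          omega
        refine ⟨0, Submodule.zero_mem _, ?_⟩
        have h0 : osE R L S - osDel R L 0 - osMul R L (osE R L {b}) (osDel R L (osE R L S))
            = ((-1 : R) ^ mulSign L {b} S) • osDel R L (osE R L (insert b S)) := by
          rw [map_zero, sub_zero]
          nth_rewrite 1 [hK]
          rw [map_smul]
          abel
        rw [h0]
        exact Submodule.smul_mem _ _ (del_dep_mem_ideal R L gl p hUp hdep)
  | zero =>
    refine ⟨0, Submodule.zero_mem _, ?_⟩
    simp only [map_zero, sub_zero]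
    exact Submodule.zero_mem _
  | add x z hx hz ihx ihz =>
    obtain ⟨y1, hy1, hm1⟩ := ihx
    obtain ⟨y2, hy2, hm2⟩ := ihz
    refine ⟨y1 + y2, Submodule.add_mem _ hy1 hy2, ?_⟩
    have h0 : x + z - osDel R L (y1 + y2)
        - osMul R L (osE R L {b}) (osDel R L (x + z))
        = (x - osDel R L y1 - osMul R L (osE R L {b}) (osDel R L x))
          + (z - osDel R L y2 - osMul R L (osE R L {b}) (osDel R L z)) := by
      rw [map_add, map_add, map_add]
      abel
    rw [h0]
    exact Submodule.add_mem _ hm1 hm2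
  | smul r x hx ihx =>
    obtain ⟨y1, hy1, hm1⟩ := ihx
    refine ⟨r • y1, Submodule.smul_mem _ _ hy1, ?_⟩
    have h0 : r • x - osDel R L (r • y1)
        - osMul R L (osE R L {b}) (osDel R L (r • x))
        = r • (x - osDel R L y1 - osMul R L (osE R L {b}) (osDel R L x)) := by
      rw [map_smul, map_smul, map_smul, smul_sub, smul_sub]
    rw [h0]
    exact Submodule.smul_mem _ _ hm1

/-- For `p ≠ ⊥` in a finite geometric lattice `L`, the chain complex
`(A^*([⊥, p]), ∂)`, graded so that the degree `-i` part is
`⊕_{q ≤ p, rk q = i} A^*([⊥, p])_q`, is exact: every cycle modulo the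
Orlik–Solomon ideal of `[⊥, p]` is a boundary modulo that ideal. -/
theorem osComplex_interval_exact (gl : GeometricLattice L) (p : L) (hp : p ≠ ⊥) :
    ∀ i : ℕ, ∀ x ∈ osIntervalPiece R L gl p i,
      osDel R L x ∈ osIntervalIdeal R L gl p →
        ∃ y ∈ osIntervalPiece R L gl p (i + 1),
          x - osDel R L y ∈ osIntervalIdeal R L gl p := by
  intro i x hx hdx
  obtain ⟨S, hS, hsup⟩ := gl.atomistic p hp
  have hne : S.Nonempty := by
    rcases S.eq_empty_or_nonempty with rfl | h
    · exact absurd (hsup.trans (by simp)) hp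
    · exact h
  obtain ⟨a, ha⟩ := hne
  set b : Atoms L := ⟨a, hS a ha⟩ with hb
  have hbp : b.val ≤ p := by
    rw [hsup]
    exact Finset.le_sup (f := id) ha
  obtain ⟨y, hy, hm⟩ := os_main_claim R L gl p b hbp i hx
  refine ⟨y, hy, ?_⟩
  have h0 : x - osDel R L y
      = (x - osDel R L y - osMul R L (osE R L {b}) (osDel R L x))
        + osMul R L (osE R L {b}) (osDel R L x) := by abel
  rw [h0]
  exact Submodule.add_mem _ hm (ideal_mul_closed R L gl p b hbp hdx)
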